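/- arXiv:1402.0810 — 2 statements merged into one kernel-verified Lean document; each statement's English description precedes it below -/
import Mathlib

section
/- Let A = {P^A_i} and B = {P^B_j} be projective observables on ℂ^d. Then Q_∞(A→B) = 0 if and only if P^A_i P^B_j = P^B_j P^A_i for all i and j. -/
open scoped BigOperators ComplexOrder
open Matrix

noncomputable section

/-- A projective observable: a finite family of mutually orthogonal
self-adjoint idempotents summing to the identity. -/
def IsProjObs {d r : ℕ} (P : Fin r → Matrix (Fin d) (Fin d) ℂ) : Prop :=
  (∀ i, (P i).IsHermitian) ∧ (∀ i, P i * P i = P i) ∧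
    (∀ i k, i ≠ k → P i * P k = 0) ∧ (∑ i, P i = 1)

/-- A density matrix: positive semidefinite with unit trace. -/
def IsDensity {d : ℕ} (ρ : Matrix (Fin d) (Fin d) ℂ) : Prop :=
  ρ.PosSemidef ∧ ρ.trace = 1

/-- The measurement channel `E^A(ρ) = Σ_i P_i ρ P_i` of a projective observable. -/
def measChannel {d r : ℕ} (P : Fin r → Matrix (Fin d) (Fin d) ℂ)
    (ρ : Matrix (Fin d) (Fin d) ℂ) : Matrix (Fin d) (Fin d) ℂ :=
  ∑ i, P i * ρ * P i

/-- `p^B_ρ(j) = tr(P^B_j ρ)`. -/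
def probB {d rB : ℕ} (Q : Fin rB → Matrix (Fin d) (Fin d) ℂ)
    (ρ : Matrix (Fin d) (Fin d) ℂ) (j : Fin rB) : ℝ :=
  ((Q j * ρ).trace).re

/-- `q^{A→B}_ρ(j) = tr(P^B_j Σ_i P^A_i ρ P^A_i)`. -/
def probAB {d rA rB : ℕ} (P : Fin rA → Matrix (Fin d) (Fin d) ℂ)
    (Q : Fin rB → Matrix (Fin d) (Fin d) ℂ)
    (ρ : Matrix (Fin d) (Fin d) ℂ) (j : Fin rB) : ℝ :=
  ((Q j * measChannel P ρ).trace).re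

open Classical in
/-- The positive semidefinite square root of a PSD matrix (junk value `0` otherwise). -/
noncomputable def msqrt {d : ℕ} (A : Matrix (Fin d) (Fin d) ℂ) :
    Matrix (Fin d) (Fin d) ℂ :=
  if h : A.PosSemidef then (h.1.eigenvectorUnitary : Matrix (Fin d) (Fin d) ℂ) *
    diagonal ((↑) ∘ (Real.sqrt ·) ∘ h.1.eigenvalues) *
    (star h.1.eigenvectorUnitary : Matrix (Fin d) (Fin d) ℂ) else 0

/-- `|X| = √(Xᴴ X)`, the positive semidefinite absolute value of a matrix. -/
noncomputable def matAbs {d : ℕ} (X : Matrix (Fin d) (Fin d) ℂ) :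
    Matrix (Fin d) (Fin d) ℂ :=
  msqrt (Xᴴ * X)

/-- The quantum fidelity `F(ρ,σ) = tr √(√ρ σ √ρ)`. -/
noncomputable def qFid {d : ℕ} (ρ σ : Matrix (Fin d) (Fin d) ℂ) : ℝ :=
  ((msqrt (msqrt ρ * σ * msqrt ρ)).trace).re

/-- Variational distance `D_1(p,q) = (1/2) Σ_j |p_j − q_j|`. -/
def distL1 {rB : ℕ} (p q : Fin rB → ℝ) : ℝ := (1 / 2) * ∑ j, |p j - q j|

/-- Chebyshev distance `D_∞(p,q) = max_j |p_j − q_j|`. -/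
noncomputable def distLinf {rB : ℕ} (p q : Fin rB → ℝ) : ℝ := ⨆ j, |p j - q j|

/-- Classical fidelity `F(p,q) = Σ_j √(p_j q_j)`. -/
noncomputable def classFid {rB : ℕ} (p q : Fin rB → ℝ) : ℝ :=
  ∑ j, Real.sqrt (p j * q j)

/-- `Q_1(A→B)`. -/
noncomputable def Q1 {d rA rB : ℕ} (P : Fin rA → Matrix (Fin d) (Fin d) ℂ)
    (Q : Fin rB → Matrix (Fin d) (Fin d) ℂ) : ℝ :=
  sSup {x : ℝ | ∃ ρ, IsDensity ρ ∧ x = distL1 (probAB P Q ρ) (probB Q ρ)}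

/-- `Q_∞(A→B)`. -/
noncomputable def Qinf {d rA rB : ℕ} (P : Fin rA → Matrix (Fin d) (Fin d) ℂ)
    (Q : Fin rB → Matrix (Fin d) (Fin d) ℂ) : ℝ :=
  sSup {x : ℝ | ∃ ρ, IsDensity ρ ∧ x = distLinf (probAB P Q ρ) (probB Q ρ)}

/-- `Q_F(A→B)`. -/
noncomputable def QF {d rA rB : ℕ} (P : Fin rA → Matrix (Fin d) (Fin d) ℂ)
    (Q : Fin rB → Matrix (Fin d) (Fin d) ℂ) : ℝ :=
  sSup {x : ℝ | ∃ ρ, IsDensity ρ ∧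
    x = 1 - (classFid (probAB P Q ρ) (probB Q ρ)) ^ 2}

/-- The rank-one projection `|v⟩⟨v|` onto a (unit) vector `v`. -/
def proj {d : ℕ} (v : Fin d → ℂ) : Matrix (Fin d) (Fin d) ℂ :=
  Matrix.vecMulVec v (star v)

section Aux


variable {d : ℕ}

lemma trace_mul_vecMulVec (M : Matrix (Fin d) (Fin d) ℂ) (v : Fin d → ℂ) :
    (M * Matrix.vecMulVec v (star v)).trace = star v ⬝ᵥ (M *ᵥ v) := by
  simp only [Matrix.trace, Matrix.diag, Matrix.mul_apply, vecMulVec_apply, dotProduct,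
    Matrix.mulVec, Finset.mul_sum, Pi.star_apply]
  exact Finset.sum_congr rfl fun a _ => Finset.sum_congr rfl fun b _ => by ring

lemma eq_zero_of_quad (M : Matrix (Fin d) (Fin d) ℂ)
    (h : ∀ v : Fin d → ℂ, star v ⬝ᵥ (M *ᵥ v) = 0) : M = 0 := by
  have h2 : Matrix.toEuclideanLin M = 0 := by
    rw [← inner_map_self_eq_zero]
    intro x
    have := h ((WithLp.equiv 2 (Fin d → ℂ)) x)
    rw [← inner_conj_symm, EuclideanSpace.inner_eq_star_dotProduct]
    simp [Matrix.toEuclideanLin_apply, this]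
    exact (dotProduct_comm _ _).trans this
  simpa using congrArg Matrix.toEuclideanLin.symm h2

lemma quad_star (M : Matrix (Fin d) (Fin d) ℂ) (hM : M.IsHermitian) (v : Fin d → ℂ) :
    star (star v ⬝ᵥ (M *ᵥ v)) = star v ⬝ᵥ (M *ᵥ v) := by
  conv_lhs => rw [Matrix.star_dotProduct, star_star, Matrix.star_mulVec, hM.eq,
    ← Matrix.dotProduct_mulVec]

lemma isDensity_vecMulVec {v : Fin d → ℂ} (hv : star v ⬝ᵥ v = 1) :
    IsDensity (Matrix.vecMulVec v (star v)) := by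
  constructor
  · refine Matrix.PosSemidef.of_dotProduct_mulVec_nonneg ?_ ?_
    · ext a b
      simp [Matrix.conjTranspose_apply, vecMulVec_apply, mul_comm]
    · intro x
      have hcalc : star x ⬝ᵥ ((Matrix.vecMulVec v (star v)) *ᵥ x)
          = star (star v ⬝ᵥ x) * (star v ⬝ᵥ x) := by
        simp only [dotProduct, Matrix.mulVec, vecMulVec_apply, Pi.star_apply, Finset.mul_sum,
          Finset.sum_mul, star_sum, star_mul', star_star]
        rw [Finset.sum_comm]
        exact Finset.sum_congr rfl fun a _ => Finset.sum_congr rfl fun b _ => by ring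
      rw [hcalc]
      exact star_mul_self_nonneg _
  · have : (Matrix.vecMulVec v (star v)).trace = star v ⬝ᵥ v := by
      simp [Matrix.trace, Matrix.diag, vecMulVec_apply, dotProduct, mul_comm]
    rw [this, hv]

lemma trace_psd_re_nonneg {M : Matrix (Fin d) (Fin d) ℂ} (hM : M.PosSemidef) :
    0 ≤ M.trace.re ∧ M.trace.im = 0 := by
  have h : (0 : ℂ) ≤ M.trace := by
    rw [Matrix.trace]
    refine Finset.sum_nonneg fun a _ => ?_
    have := hM.dotProduct_mulVec_nonneg (Pi.single a 1)
    simpa [Matrix.mulVec_single, dotProduct, Pi.single_apply, Matrix.diag] using this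
  rw [Complex.le_def] at h
  simpa using ⟨h.1, h.2.symm⟩

lemma key_trace {rA rB : ℕ} (P : Fin rA → Matrix (Fin d) (Fin d) ℂ)
    (Q : Fin rB → Matrix (Fin d) (Fin d) ℂ) (ρ : Matrix (Fin d) (Fin d) ℂ) (j : Fin rB) :
    (Q j * measChannel P ρ).trace = ((∑ i, P i * Q j * P i) * ρ).trace := by
  rw [measChannel, Finset.mul_sum, Matrix.trace_sum, Finset.sum_mul, Matrix.trace_sum]
  refine Finset.sum_congr rfl fun i _ => ?_
  rw [show Q j * (P i * ρ * P i) = (Q j * P i * ρ) * P i by noncomm_ring,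
    Matrix.trace_mul_comm,
    show P i * (Q j * P i * ρ) = (P i * Q j * P i) * ρ by noncomm_ring]


lemma trace_proj_mul_re_nonneg {A ρ : Matrix (Fin d) (Fin d) ℂ}
    (hAh : A.IsHermitian) (hAi : A * A = A) (hρ : ρ.PosSemidef) :
    0 ≤ ((A * ρ).trace).re ∧ ((A * ρ).trace).im = 0 := by
  have h1 : (A * ρ).trace = (A * ρ * Aᴴ).trace := by
    rw [hAh.eq]
    conv_rhs => rw [Matrix.trace_mul_comm, ← Matrix.mul_assoc, hAi]
  rw [h1]
  exact trace_psd_re_nonneg (hρ.mul_mul_conjTranspose_same A)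

lemma probB_bounds {rB : ℕ} {Q : Fin rB → Matrix (Fin d) (Fin d) ℂ}
    (hQ : IsProjObs Q) {ρ : Matrix (Fin d) (Fin d) ℂ} (hρ : IsDensity ρ) (j : Fin rB) :
    0 ≤ probB Q ρ j ∧ probB Q ρ j ≤ 1 := by
  obtain ⟨hQh, hQi, -, -⟩ := hQ
  refine ⟨(trace_proj_mul_re_nonneg (hQh j) (hQi j) hρ.1).1, ?_⟩
  have h1 : ((1 - Q j)ᴴ : Matrix (Fin d) (Fin d) ℂ) = 1 - Q j := by
    rw [Matrix.conjTranspose_sub, Matrix.conjTranspose_one, (hQh j).eq]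
  have h2 : (1 - Q j) * (1 - Q j) = 1 - Q j := by
    simp [sub_mul, mul_sub, hQi j]
  have h3 := (trace_proj_mul_re_nonneg (A := 1 - Q j) h1 h2 hρ.1).1
  rw [Matrix.sub_mul, Matrix.one_mul, Matrix.trace_sub, Complex.sub_re] at h3
  have h4 : ρ.trace.re = 1 := by rw [hρ.2]; simp
  rw [h4] at h3
  unfold probB
  linarith

lemma measChannel_density {rA : ℕ} {P : Fin rA → Matrix (Fin d) (Fin d) ℂ}
    (hP : IsProjObs P) {ρ : Matrix (Fin d) (Fin d) ℂ} (hρ : IsDensity ρ) :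
    IsDensity (measChannel P ρ) := by
  obtain ⟨hPh, hPi, -, hPs⟩ := hP
  constructor
  · rw [measChannel]
    refine Finset.sum_induction _ _ (fun a b ha hb => ha.add hb) Matrix.PosSemidef.zero ?_
    intro i _
    have := hρ.1.mul_mul_conjTranspose_same (P i)
    rwa [(hPh i).eq] at this
  · rw [measChannel, Matrix.trace_sum]
    have h1 : ∀ i : Fin rA, (P i * ρ * P i).trace = (P i * ρ).trace := by
      intro i
      rw [Matrix.trace_mul_comm, ← Matrix.mul_assoc, hPi i]
    simp_rw [h1, ← Matrix.trace_sum, ← Finset.sum_mul, hPs, Matrix.one_mul, hρ.2]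

end Aux

theorem stmt_3 {d rA rB : ℕ} (hd : 0 < d)
    (P : Fin rA → Matrix (Fin d) (Fin d) ℂ) (Q : Fin rB → Matrix (Fin d) (Fin d) ℂ)
    (hP : IsProjObs P) (hQ : IsProjObs Q) :
    Qinf P Q = 0 ↔ (∀ i j, P i * Q j = Q j * P i) := by
  classical
  obtain ⟨hPh, hPi, hPo, hPs⟩ := id hP
  obtain ⟨hQh, hQi, hQo, hQs⟩ := id hQ
  set S : Set ℝ :=
    {x : ℝ | ∃ ρ, IsDensity ρ ∧ x = distLinf (probAB P Q ρ) (probB Q ρ)} with hS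
  have hρ0 : IsDensity (Matrix.vecMulVec (Pi.single (⟨0, hd⟩ : Fin d) (1 : ℂ))
      (star (Pi.single (⟨0, hd⟩ : Fin d) (1 : ℂ)))) := by
    apply isDensity_vecMulVec
    simp [dotProduct, Pi.single_apply]
  constructor
  · intro h0 i j
    -- boundedness of S
    have hbdd : BddAbove S := by
      refine ⟨1, fun x hx => ?_⟩
      obtain ⟨ρ, hρ, rfl⟩ := hx
      refine Real.iSup_le (fun k => ?_) zero_le_one
      have h1 := probB_bounds hQ hρ k
      have h2 := probB_bounds hQ (measChannel_density hP hρ) k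
      have h3 : probAB P Q ρ k = probB Q (measChannel P ρ) k := rfl
      rw [abs_sub_le_iff]
      constructor <;> [rw [h3]; rw [h3]] <;> linarith [h1.1, h1.2, h2.1, h2.2]
    -- all probabilities agree
    have heq : ∀ ρ, IsDensity ρ → ∀ k, probAB P Q ρ k = probB Q ρ k := by
      intro ρ hρ k
      have hmem : distLinf (probAB P Q ρ) (probB Q ρ) ∈ S := ⟨ρ, hρ, rfl⟩
      have h1 : distLinf (probAB P Q ρ) (probB Q ρ) ≤ 0 := h0 ▸ le_csSup hbdd hmem
      have h2 : |probAB P Q ρ k - probB Q ρ k| ≤ distLinf (probAB P Q ρ) (probB Q ρ) := by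
        unfold distLinf
        exact le_ciSup (Set.Finite.bddAbove (Set.finite_range
          (fun m => |probAB P Q ρ m - probB Q ρ m|))) k
      have := abs_nonneg (probAB P Q ρ k - probB Q ρ k)
      have h4 : |probAB P Q ρ k - probB Q ρ k| = 0 := le_antisymm (h2.trans h1) this
      have := abs_eq_zero.mp h4
      linarith [sub_eq_zero.mp this]
    set N : Matrix (Fin d) (Fin d) ℂ := (∑ k, P k * Q j * P k) - Q j with hN
    have hNh : N.IsHermitian := by
      have hsum : (∑ k, P k * Q j * P k).IsHermitian := by
        rw [Matrix.IsHermitian, Matrix.conjTranspose_sum]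
        refine Finset.sum_congr rfl fun k _ => ?_
        rw [Matrix.conjTranspose_mul, Matrix.conjTranspose_mul, (hPh k).eq, (hQh j).eq,
          Matrix.mul_assoc]
      exact hsum.sub (hQh j)
    have htr : ∀ ρ, IsDensity ρ → ((N * ρ).trace).re = 0 := by
      intro ρ hρ
      have hk := key_trace P Q ρ j
      have := heq ρ hρ j
      unfold probAB probB at this
      rw [hk] at this
      rw [hN, Matrix.sub_mul, Matrix.trace_sub, Complex.sub_re, this, sub_self]
    have hquad1 : ∀ v : Fin d → ℂ, star v ⬝ᵥ v = 1 → star v ⬝ᵥ (N *ᵥ v) = 0 := by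
      intro v hv
      have hρv := isDensity_vecMulVec hv
      have h1 := htr _ hρv
      rw [trace_mul_vecMulVec] at h1
      have h2 := quad_star N hNh v
      have him : (star v ⬝ᵥ (N *ᵥ v)).im = 0 := Complex.conj_eq_iff_im.mp h2
      exact Complex.ext h1 him
    have hquad : ∀ x : Fin d → ℂ, star x ⬝ᵥ (N *ᵥ x) = 0 := by
      intro x
      by_cases hx : x = 0
      · simp [hx]
      · set t : ℝ := ∑ a, Complex.normSq (x a) with ht
        have htpos : 0 < t := by
          obtain ⟨a, ha⟩ := Function.ne_iff.mp hx
          exact Finset.sum_pos' (fun b _ => Complex.normSq_nonneg _)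
            ⟨a, Finset.mem_univ a, Complex.normSq_pos.mpr ha⟩
        set c : ℝ := (Real.sqrt t)⁻¹ with hc
        have hcpos : 0 < c := inv_pos.mpr (Real.sqrt_pos.mpr htpos)
        set v : Fin d → ℂ := (c : ℂ) • x with hv
        have hstarv : star v = (c : ℂ) • star x := by
          rw [hv, star_smul, Complex.star_def, Complex.conj_ofReal]
        have hxx : star x ⬝ᵥ x = (t : ℂ) := by
          rw [ht]
          push_cast
          refine Finset.sum_congr rfl fun a _ => ?_
          rw [Pi.star_apply, Complex.star_def, mul_comm, Complex.mul_conj]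
        have hvv : star v ⬝ᵥ v = 1 := by
          rw [hv, hstarv, smul_dotProduct, dotProduct_smul, hxx, smul_eq_mul, smul_eq_mul]
          rw [← Complex.ofReal_mul, ← Complex.ofReal_mul]
          norm_cast
          rw [hc, ← mul_assoc, ← mul_inv, Real.mul_self_sqrt htpos.le]
          field_simp
        have h1 := hquad1 v hvv
        rw [hv, hstarv, Matrix.mulVec_smul, smul_dotProduct, dotProduct_smul,
          smul_eq_mul, smul_eq_mul] at h1
        have hcne : ((c : ℂ)) ≠ 0 := by
          simp [Complex.ofReal_ne_zero, ne_of_gt hcpos]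
        rcases mul_eq_zero.mp h1 with h | h
        · exact absurd h hcne
        rcases mul_eq_zero.mp h with h' | h'
        · exact absurd h' hcne
        · exact h'
    have hN0 : N = 0 := eq_zero_of_quad N hquad
    have hEq : (∑ k, P k * Q j * P k) = Q j := sub_eq_zero.mp hN0
    have hL : P i * Q j = P i * Q j * P i := by
      conv_lhs => rw [← hEq, Finset.mul_sum]
      rw [Finset.sum_eq_single i
        (fun b _ hb => by
          rw [show P i * (P b * Q j * P b) = (P i * P b) * (Q j * P b) by noncomm_ring,
            hPo i b (Ne.symm hb), Matrix.zero_mul])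
        (fun h => absurd (Finset.mem_univ i) h)]
      rw [show P i * (P i * Q j * P i) = (P i * P i) * Q j * P i by noncomm_ring, hPi i]
    have hR : Q j * P i = P i * Q j * P i := by
      conv_lhs => rw [← hEq, Finset.sum_mul]
      rw [Finset.sum_eq_single i
        (fun b _ hb => by
          rw [show P b * Q j * P b * P i = (P b * Q j) * (P b * P i) by noncomm_ring,
            hPo b i hb, Matrix.mul_zero])
        (fun h => absurd (Finset.mem_univ i) h),
        Matrix.mul_assoc (P i * Q j) (P i) (P i), hPi i]
    rw [hL, hR]
  · intro hc
    have hdist0 : ∀ p : Fin rB → ℝ, distLinf p p = 0 := by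
      intro p
      unfold distLinf
      rcases isEmpty_or_nonempty (Fin rB) with h | h
      · exact Real.iSup_of_isEmpty _
      · simp [ciSup_const]
    have hsum : ∀ j, (∑ k, P k * Q j * P k) = Q j := by
      intro j
      have h1 : ∀ k, P k * Q j * P k = Q j * P k := by
        intro k
        rw [show P k * Q j * P k = (P k * Q j) * P k from rfl, hc k j, Matrix.mul_assoc, hPi k]
      simp_rw [h1, ← Finset.mul_sum, hPs, Matrix.mul_one]
    have hprob : ∀ ρ j, probAB P Q ρ j = probB Q ρ j := by
      intro ρ j
      unfold probAB probB
      rw [key_trace P Q ρ j, hsum j]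
    have hSeq : S = {0} := by
      ext x
      simp only [Set.mem_singleton_iff, hS, Set.mem_setOf_eq]
      constructor
      · rintro ⟨ρ, hρ, rfl⟩
        rw [show probAB P Q ρ = probB Q ρ from funext (hprob ρ)]
        exact hdist0 _
      · rintro rfl
        refine ⟨_, hρ0, ?_⟩
        rw [show probAB P Q _ = probB Q _ from funext (hprob _)]
        exact (hdist0 _).symm
    show sSup S = 0
    rw [hSeq]
    exact csSup_singleton 0

end
end

section
/- Let A = {A_i}_{i=1}^{N_A} and B = {B_j}_{j=1}^{N_B} be discrete POVMs on ℂ^d, and let Φ^A_L be the Lüders channel of A. Then the fidelity-based incompatibility satisfies Q_F(Φ^A_L → Φ^B_L) = sup over density matrices ρ of [1 − (Σ_j √(tr(B_j Φ^A_L(ρ)) · tr(B_j ρ)))²] ≤ 1 − 1/N_A. -/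
open scoped BigOperators ComplexOrder
open Matrix

noncomputable section

/-- A discrete POVM: positive semidefinite effects summing to the identity. -/
def IsPOVM {d N : ℕ} (A : Fin N → Matrix (Fin d) (Fin d) ℂ) : Prop :=
  (∀ i, (A i).PosSemidef) ∧ ∑ i, A i = 1

/-- The Lüders channel `Φ^A_L(ρ) = Σ_i √A_i ρ √A_i` of a POVM. -/
noncomputable def luders {d N : ℕ} (A : Fin N → Matrix (Fin d) (Fin d) ℂ)
    (ρ : Matrix (Fin d) (Fin d) ℂ) : Matrix (Fin d) (Fin d) ℂ :=
  ∑ i, msqrt (A i) * ρ * msqrt (A i)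

-- auxiliary lemmas

/-- The explicit PSD square root (formerly in Mathlib). -/
noncomputable def Matrix.PosSemidef.sqrt {d : ℕ} {A : Matrix (Fin d) (Fin d) ℂ}
    (h : A.PosSemidef) : Matrix (Fin d) (Fin d) ℂ :=
  (h.1.eigenvectorUnitary : Matrix (Fin d) (Fin d) ℂ) *
    diagonal ((↑) ∘ (Real.sqrt ·) ∘ h.1.eigenvalues) *
    (star h.1.eigenvectorUnitary : Matrix (Fin d) (Fin d) ℂ)

lemma Matrix.PosSemidef.posSemidef_sqrt {d : ℕ} {A : Matrix (Fin d) (Fin d) ℂ}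
    (h : A.PosSemidef) : h.sqrt.PosSemidef := by
  unfold Matrix.PosSemidef.sqrt
  rw [Matrix.star_eq_conjTranspose]
  refine Matrix.PosSemidef.mul_mul_conjTranspose_same ?_ _
  refine Matrix.PosSemidef.diagonal fun i => ?_
  simp only [Pi.zero_apply, Function.comp_apply]
  exact Complex.zero_le_real.mpr (Real.sqrt_nonneg _)

lemma Matrix.PosSemidef.sqrt_mul_self {d : ℕ} {A : Matrix (Fin d) (Fin d) ℂ}
    (h : A.PosSemidef) : h.sqrt * h.sqrt = A := by
  have e2 : A = (h.1.eigenvectorUnitary : Matrix (Fin d) (Fin d) ℂ)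
      * Matrix.diagonal (RCLike.ofReal ∘ h.1.eigenvalues)
      * star (h.1.eigenvectorUnitary : Matrix (Fin d) (Fin d) ℂ) := h.1.spectral_theorem
  have hu := Unitary.coe_star_mul_self h.1.eigenvectorUnitary
  unfold Matrix.PosSemidef.sqrt
  conv_rhs => rw [e2]
  simp only [Matrix.mul_assoc]
  rw [← Matrix.mul_assoc (star _) (h.1.eigenvectorUnitary : Matrix (Fin d) (Fin d) ℂ), hu,
    Matrix.one_mul, ← Matrix.mul_assoc (diagonal _), Matrix.diagonal_mul_diagonal]
  congr 3
  funext i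
  simp only [Function.comp_apply]
  rw [← Complex.ofReal_mul, Real.mul_self_sqrt (h.eigenvalues_nonneg i)]
  rfl

lemma Matrix.posSemidef_iff_eq_transpose_mul_self {d : ℕ} {A : Matrix (Fin d) (Fin d) ℂ} :
    A.PosSemidef ↔ ∃ B : Matrix (Fin d) (Fin d) ℂ, A = Bᴴ * B := by
  constructor
  · intro h
    refine ⟨h.sqrt, ?_⟩
    rw [h.posSemidef_sqrt.1, h.sqrt_mul_self]
  · rintro ⟨B, rfl⟩
    exact Matrix.posSemidef_conjTranspose_mul_self B


lemma trace_cTm {d : ℕ} (X : Matrix (Fin d) (Fin d) ℂ) :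
    (Xᴴ * X).trace = ((∑ a, ∑ b, Complex.normSq (X a b) : ℝ) : ℂ) := by
  rw [Matrix.trace]
  push_cast
  rw [Finset.sum_comm]
  congr 1; ext b
  simp only [Matrix.diag_apply, Matrix.mul_apply, Matrix.conjTranspose_apply]
  congr 1; ext a
  rw [Complex.star_def, Complex.normSq_eq_conj_mul_self]

lemma trace_cTm_re {d : ℕ} (X : Matrix (Fin d) (Fin d) ℂ) :
    ((Xᴴ * X).trace).re = ∑ a, ∑ b, Complex.normSq (X a b) := by
  rw [trace_cTm]; simp

lemma trace_cTm_re_nonneg {d : ℕ} (X : Matrix (Fin d) (Fin d) ℂ) :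
    0 ≤ ((Xᴴ * X).trace).re := by
  rw [trace_cTm_re]
  exact Finset.sum_nonneg fun a _ => Finset.sum_nonneg fun b _ => Complex.normSq_nonneg _

/-- Cauchy–Schwarz for the trace inner product. -/
lemma trace_cs {d : ℕ} (X Y : Matrix (Fin d) (Fin d) ℂ) :
    ‖(Xᴴ * Y).trace‖ ≤
      Real.sqrt (((Xᴴ * X).trace).re * ((Yᴴ * Y).trace).re) := by
  have h1 : (Xᴴ * Y).trace = ∑ a, ∑ b, star (X a b) * Y a b := by
    rw [Matrix.trace]
    simp only [Matrix.diag_apply, Matrix.mul_apply, Matrix.conjTranspose_apply]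
    rw [Finset.sum_comm]
  have h2 : ‖(Xᴴ * Y).trace‖ ≤
      ∑ a, ∑ b, ‖X a b‖ * ‖Y a b‖ := by
    rw [h1]
    refine (norm_sum_le _ _).trans (Finset.sum_le_sum fun a _ => ?_)
    refine (norm_sum_le _ _).trans (Finset.sum_le_sum fun b _ => ?_)
    rw [norm_mul]; simp
  refine h2.trans ?_
  have h3 := Real.sum_mul_le_sqrt_mul_sqrt (Finset.univ (α := Fin d × Fin d))
    (fun p => ‖X p.1 p.2‖) (fun p => ‖Y p.1 p.2‖)
  rw [Fintype.sum_prod_type] at h3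
  calc ∑ a, ∑ b, ‖X a b‖ * ‖Y a b‖
      ≤ √(∑ p : Fin d × Fin d, ‖X p.1 p.2‖ ^ 2) *
        √(∑ p : Fin d × Fin d, ‖Y p.1 p.2‖ ^ 2) := h3
    _ = √(((Xᴴ * X).trace).re * ((Yᴴ * Y).trace).re) := by
        rw [← Real.sqrt_mul (by positivity)]
        congr 2
        · rw [trace_cTm_re, Fintype.sum_prod_type]
          exact Finset.sum_congr rfl fun a _ => Finset.sum_congr rfl fun b _ => by
            rw [Complex.sq_norm]
        · rw [trace_cTm_re, Fintype.sum_prod_type]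
          exact Finset.sum_congr rfl fun a _ => Finset.sum_congr rfl fun b _ => by
            rw [Complex.sq_norm]

/-- trace of a product of PSD matrices has nonnegative real part. -/
lemma psd_trace_nonneg {d : ℕ} {M ρ : Matrix (Fin d) (Fin d) ℂ}
    (hM : M.PosSemidef) (hρ : ρ.PosSemidef) : 0 ≤ ((M * ρ).trace).re := by
  obtain ⟨C, hC⟩ := (Matrix.posSemidef_iff_eq_transpose_mul_self).mp hM
  obtain ⟨D, hD⟩ := (Matrix.posSemidef_iff_eq_transpose_mul_self).mp hρ
  have : (M * ρ).trace = (((C * Dᴴ)ᴴ) * (C * Dᴴ)).trace := by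
    rw [hC, hD, Matrix.conjTranspose_mul, Matrix.conjTranspose_conjTranspose]
    rw [Matrix.trace_mul_comm (Cᴴ * C)]
    simp only [Matrix.mul_assoc]
    rw [Matrix.trace_mul_comm Dᴴ]
    simp only [Matrix.mul_assoc]
  rw [this]
  exact trace_cTm_re_nonneg _

lemma dot_star_self_re {d : ℕ} (v : Fin d → ℂ) :
    (dotProduct (star v) v).re = ∑ k, ‖v k‖ ^ 2 := by
  have : dotProduct (star v) v = ((∑ k, ‖v k‖ ^ 2 : ℝ) : ℂ) := by
    push_cast
    simp only [dotProduct, Pi.star_apply, Complex.star_def]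
    congr 1; ext k
    rw [← Complex.normSq_eq_conj_mul_self, ← Complex.sq_norm, Complex.ofReal_pow]
  rw [this, Complex.ofReal_re]

lemma eigenvalues_le_one {d : ℕ} {A : Matrix (Fin d) (Fin d) ℂ}
    (hH : A.IsHermitian) (h1 : (1 - A).PosSemidef) (i : Fin d) :
    hH.eigenvalues i ≤ 1 := by
  set v : Fin d → ℂ := ⇑(hH.eigenvectorBasis i) with hv_def
  have hv := h1.dotProduct_mulVec_nonneg v
  have hre : 0 ≤ (dotProduct (star v) ((1 - A) *ᵥ v)).re :=
    (Complex.le_def.mp hv).1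
  rw [Matrix.sub_mulVec, Matrix.one_mulVec, dotProduct_sub, Complex.sub_re] at hre
  have h2 : (dotProduct (star v) v).re = 1 := by
    rw [dot_star_self_re]
    have hn : ‖hH.eigenvectorBasis i‖ = 1 := hH.eigenvectorBasis.orthonormal.1 i
    rw [EuclideanSpace.norm_eq] at hn
    have h0 : (0:ℝ) ≤ ∑ k, ‖(hH.eigenvectorBasis i) k‖ ^ 2 :=
      Finset.sum_nonneg fun k _ => sq_nonneg _
    have := Real.sq_sqrt h0
    rw [hn] at this
    rw [hv_def]
    exact_mod_cast this.symm.trans (by norm_num)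
  have h3 := hH.eigenvalues_eq i
  rw [RCLike.re_to_complex] at h3
  rw [← hv_def] at h3
  linarith

/-- If `0 ≤ A ≤ 1` then `√A - A` is PSD. -/
lemma sqrt_sub_posSemidef {d : ℕ} {A : Matrix (Fin d) (Fin d) ℂ}
    (hA : A.PosSemidef) (h1 : (1 - A).PosSemidef) :
    (hA.sqrt - A).PosSemidef := by
  have e1 : hA.sqrt = (hA.1.eigenvectorUnitary : Matrix (Fin d) (Fin d) ℂ)
      * Matrix.diagonal (RCLike.ofReal ∘ Real.sqrt ∘ hA.1.eigenvalues)
      * star (hA.1.eigenvectorUnitary : Matrix (Fin d) (Fin d) ℂ) := rfl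
  have e2 : A = (hA.1.eigenvectorUnitary : Matrix (Fin d) (Fin d) ℂ)
      * Matrix.diagonal (RCLike.ofReal ∘ hA.1.eigenvalues)
      * star (hA.1.eigenvectorUnitary : Matrix (Fin d) (Fin d) ℂ) := hA.1.spectral_theorem
  have hkey : hA.sqrt - A = (hA.1.eigenvectorUnitary : Matrix (Fin d) (Fin d) ℂ)
      * Matrix.diagonal (fun i =>
          (RCLike.ofReal ∘ Real.sqrt ∘ hA.1.eigenvalues) i - (RCLike.ofReal ∘ hA.1.eigenvalues) i)
      * star (hA.1.eigenvectorUnitary : Matrix (Fin d) (Fin d) ℂ) := by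
    rw [← Matrix.diagonal_sub, Matrix.mul_sub, Matrix.sub_mul, ← e1, ← e2]
  rw [hkey, Matrix.star_eq_conjTranspose]
  refine Matrix.PosSemidef.mul_mul_conjTranspose_same ?_ _
  refine Matrix.PosSemidef.diagonal fun i => ?_
  simp only [Pi.zero_apply, Function.comp_apply]
  rw [show (RCLike.ofReal (Real.sqrt (hA.1.eigenvalues i)) : ℂ) - RCLike.ofReal (hA.1.eigenvalues i)
      = ((Real.sqrt (hA.1.eigenvalues i) - hA.1.eigenvalues i : ℝ) : ℂ) by push_cast; rfl]
  rw [Complex.zero_le_real]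
  have h0 := hA.eigenvalues_nonneg i
  have hle := eigenvalues_le_one hA.1 h1 i
  nlinarith [Real.sq_sqrt h0, Real.sqrt_nonneg (hA.1.eigenvalues i)]

lemma sq_id {d : ℕ} {M ρ : Matrix (Fin d) (Fin d) ℂ} (hM : M.PosSemidef) (hρ : ρ.PosSemidef)
    (C : Matrix (Fin d) (Fin d) ℂ) :
    ((hM.sqrt * (C * hρ.sqrt))ᴴ * (hM.sqrt * (C * hρ.sqrt))).trace
      = (M * (C * ρ * Cᴴ)).trace := by
  have hT : hM.sqrtᴴ = hM.sqrt := hM.posSemidef_sqrt.1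
  have hR : hρ.sqrtᴴ = hρ.sqrt := hρ.posSemidef_sqrt.1
  rw [Matrix.conjTranspose_mul, Matrix.conjTranspose_mul, hT, hR]
  simp only [Matrix.mul_assoc]
  rw [← Matrix.mul_assoc hM.sqrt hM.sqrt, hM.sqrt_mul_self, Matrix.trace_mul_comm]
  simp only [Matrix.mul_assoc]
  rw [hρ.sqrt_mul_self, Matrix.trace_mul_comm]
  simp only [Matrix.mul_assoc]

lemma cross_id {d : ℕ} {M ρ : Matrix (Fin d) (Fin d) ℂ} (hM : M.PosSemidef) (hρ : ρ.PosSemidef)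
    (C : Matrix (Fin d) (Fin d) ℂ) :
    ((hM.sqrt * hρ.sqrt)ᴴ * (hM.sqrt * (C * hρ.sqrt))).trace
      = (M * (C * ρ)).trace := by
  have hT : hM.sqrtᴴ = hM.sqrt := hM.posSemidef_sqrt.1
  have hR : hρ.sqrtᴴ = hρ.sqrt := hρ.posSemidef_sqrt.1
  rw [Matrix.conjTranspose_mul, hT, hR]
  simp only [Matrix.mul_assoc]
  rw [← Matrix.mul_assoc hM.sqrt hM.sqrt, hM.sqrt_mul_self, Matrix.trace_mul_comm]
  simp only [Matrix.mul_assoc]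
  rw [hρ.sqrt_mul_self]

lemma sq_id' {d : ℕ} {M ρ : Matrix (Fin d) (Fin d) ℂ} (hM : M.PosSemidef) (hρ : ρ.PosSemidef) :
    ((hM.sqrt * hρ.sqrt)ᴴ * (hM.sqrt * hρ.sqrt)).trace = (M * ρ).trace := by
  simpa using cross_id hM hρ 1


theorem stmt_17 {d NA NB : ℕ} (hd : 0 < d)
    (A : Fin NA → Matrix (Fin d) (Fin d) ℂ) (B : Fin NB → Matrix (Fin d) (Fin d) ℂ)
    (hA : IsPOVM A) (hB : IsPOVM B) :
    sSup {x : ℝ | ∃ ρ, IsDensity ρ ∧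
        x = 1 - (∑ j, Real.sqrt
          (((B j * luders A ρ).trace).re * ((B j * ρ).trace).re)) ^ 2}
      ≤ 1 - 1 / (NA : ℝ) := by
  -- NA is positive
  have hone : (1 : Matrix (Fin d) (Fin d) ℂ) ≠ 0 := by
    intro h
    have := congrArg (fun M => M ⟨0, hd⟩ ⟨0, hd⟩) h
    simp [Matrix.one_apply] at this
  have hNA : 0 < NA := by
    by_contra h
    push_neg at h
    interval_cases NA
    exact hone (by rw [← hA.2]; simp)
  have hNA' : (0:ℝ) < NA := by exact_mod_cast hNA
  refine Real.sSup_le ?_ (by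
    have : 1 / (NA:ℝ) ≤ 1 := by
      rw [div_le_one hNA']; exact_mod_cast hNA
    linarith)
  rintro x ⟨ρ, ⟨hρ, hρtr⟩, rfl⟩
  set F := ∑ j, Real.sqrt (((B j * luders A ρ).trace).re * ((B j * ρ).trace).re) with hFdef
  have hF0 : 0 ≤ F := Finset.sum_nonneg fun j _ => Real.sqrt_nonneg _
  -- notation
  set p : Fin NB → ℝ := fun j => ((B j * ρ).trace).re with hp
  set q : Fin NB → ℝ := fun j => ((B j * luders A ρ).trace).re with hq
  set qq : Fin NA → Fin NB → ℝ :=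
    fun i j => ((B j * ((hA.1 i).sqrt * ρ * (hA.1 i).sqrt)).trace).re with hqq
  have hSherm : ∀ i, ((hA.1 i).sqrt)ᴴ = (hA.1 i).sqrt := fun i => (hA.1 i).posSemidef_sqrt.1
  -- basic facts
  have h_pnn : ∀ j, 0 ≤ p j := fun j => psd_trace_nonneg (hB.1 j) hρ
  have h_qqnn : ∀ i j, 0 ≤ qq i j := by
    intro i j
    have h1 : ((hA.1 i).sqrt * ρ * (hA.1 i).sqrt).PosSemidef := by
      have := hρ.mul_mul_conjTranspose_same (hA.1 i).sqrt
      rwa [hSherm i] at this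
    exact psd_trace_nonneg (hB.1 j) h1
  have h_qsum : ∀ j, q j = ∑ i, qq i j := by
    intro j
    rw [hq]
    have hmA : ∀ i, msqrt (A i) = (hA.1 i).sqrt := fun i => by
      unfold msqrt; exact dif_pos (hA.1 i)
    simp only [luders]
    rw [Finset.mul_sum, Matrix.trace_sum, Complex.re_sum]
    exact Finset.sum_congr rfl fun i _ => by rw [hmA i]
  -- Cauchy–Schwarz step
  have h_cross : ∀ i j, ((B j * ((hA.1 i).sqrt * ρ)).trace).re
      ≤ Real.sqrt (p j) * Real.sqrt (qq i j) := by
    intro i j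
    have hcs := trace_cs ((hB.1 j).sqrt * hρ.sqrt) ((hB.1 j).sqrt * ((hA.1 i).sqrt * hρ.sqrt))
    rw [cross_id (hB.1 j) hρ ((hA.1 i).sqrt)] at hcs
    rw [sq_id' (hB.1 j) hρ] at hcs
    rw [sq_id (hB.1 j) hρ ((hA.1 i).sqrt)] at hcs
    rw [hSherm i] at hcs
    have h1 : ((B j * ((hA.1 i).sqrt * ρ)).trace).re
        ≤ ‖(B j * ((hA.1 i).sqrt * ρ)).trace‖ := Complex.re_le_norm _
    have h2 : Real.sqrt (((B j * ρ).trace).re * ((B j * ((hA.1 i).sqrt * ρ * (hA.1 i).sqrt)).trace).re)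
        = Real.sqrt (p j) * Real.sqrt (qq i j) :=
      Real.sqrt_mul (h_pnn j) _
    rw [h2] at hcs
    exact h1.trans hcs
  -- sum over i with Cauchy–Schwarz
  have h_sumi : ∀ j, ∑ i, Real.sqrt (p j) * Real.sqrt (qq i j)
      ≤ Real.sqrt NA * Real.sqrt (q j * p j) := by
    intro j
    have := Real.sum_sqrt_mul_sqrt_le (Finset.univ (α := Fin NA))
      (f := fun _ => p j) (g := fun i => qq i j) (fun i => h_pnn j) (fun i => h_qqnn i j)
    calc ∑ i, Real.sqrt (p j) * Real.sqrt (qq i j) ≤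
        Real.sqrt (∑ _i : Fin NA, p j) * Real.sqrt (∑ i, qq i j) := this
      _ = Real.sqrt NA * Real.sqrt (q j * p j) := by
          have hqj0 : 0 ≤ q j := by
            rw [h_qsum j]
            exact Finset.sum_nonneg fun i _ => h_qqnn i j
          rw [Finset.sum_const, Finset.card_univ, Fintype.card_fin, ← h_qsum j]
          rw [nsmul_eq_mul, Real.sqrt_mul (le_of_lt hNA'), Real.sqrt_mul hqj0]
          ring
  -- lower bound: sum over j of cross terms
  have h_lower : ∀ i, ((A i * ρ).trace).re ≤ ∑ j, ((B j * ((hA.1 i).sqrt * ρ)).trace).re := by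
    intro i
    have e1 : ∑ j, ((B j * ((hA.1 i).sqrt * ρ)).trace).re = (((hA.1 i).sqrt * ρ).trace).re := by
      rw [← Complex.re_sum, ← Matrix.trace_sum, ← Finset.sum_mul, hB.2, one_mul]
    rw [e1]
    have h1A : (1 - A i).PosSemidef := by
      have e : 1 - A i = ∑ k ∈ Finset.univ.erase i, A k := by
        rw [Finset.sum_erase_eq_sub (Finset.mem_univ i), hA.2]
      rw [e]
      exact Finset.sum_induction _ _ (fun a b ha hb => ha.add hb) Matrix.PosSemidef.zero
        (fun k _ => hA.1 k)
    have hpsd := sqrt_sub_posSemidef (hA.1 i) h1A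
    have := psd_trace_nonneg hpsd hρ
    rw [Matrix.sub_mul, Matrix.trace_sub, Complex.sub_re] at this
    linarith
  -- chain
  have h_one : (1:ℝ) ≤ ∑ i, ((A i * ρ).trace).re + 0 := by
    rw [add_zero, ← Complex.re_sum, ← Matrix.trace_sum, ← Finset.sum_mul, hA.2, one_mul, hρtr]
    norm_num
  have h_main : (1:ℝ) ≤ Real.sqrt NA * F := by
    have c1 : (1:ℝ) ≤ ∑ i, ((A i * ρ).trace).re := by linarith
    have c2 : ∑ i, ((A i * ρ).trace).re
        ≤ ∑ i, ∑ j, ((B j * ((hA.1 i).sqrt * ρ)).trace).re :=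
      Finset.sum_le_sum fun i _ => h_lower i
    have c3 : ∑ i, ∑ j, ((B j * ((hA.1 i).sqrt * ρ)).trace).re
        ≤ ∑ i, ∑ j, Real.sqrt (p j) * Real.sqrt (qq i j) :=
      Finset.sum_le_sum fun i _ => Finset.sum_le_sum fun j _ => h_cross i j
    have c4 : ∑ i, ∑ j, Real.sqrt (p j) * Real.sqrt (qq i j)
        = ∑ j, ∑ i, Real.sqrt (p j) * Real.sqrt (qq i j) := Finset.sum_comm
    have c5 : ∑ j, ∑ i, Real.sqrt (p j) * Real.sqrt (qq i j)
        ≤ ∑ j, Real.sqrt NA * Real.sqrt (q j * p j) :=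
      Finset.sum_le_sum fun j _ => h_sumi j
    have c6 : ∑ j, Real.sqrt NA * Real.sqrt (q j * p j) = Real.sqrt NA * F := by
      rw [hFdef, Finset.mul_sum]
    linarith
  -- conclude
  have hsq : (1:ℝ) ≤ NA * F ^ 2 := by
    nlinarith [Real.sq_sqrt (le_of_lt hNA'), Real.sqrt_nonneg (NA:ℝ)]
  have : 1 / (NA:ℝ) ≤ F ^ 2 := by
    rw [div_le_iff₀ hNA']
    linarith
  linarith



end
end
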